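/- For every λ ∈ ℝ^T and every Markov deterministic optimal policy π^λ of the sub-MDP Q(λ), the vector (m − K·E^{π^λ}[A_t] : 1 ≤ t ≤ T) is a subgradient of P at λ: for all λ' ∈ ℝ^T, P(λ') ≥ P(λ) + ∑_{t=1}^T (m − K·E^{π^λ}[A_t])·(λ'_t − λ_t). -/

import Mathlib

open Finset

namespace RMAB

/-- Numeric value of an action: the active action `true` counts as `1`. -/
def actVal (a : Bool) : ℝ := if a then 1 else 0

section Core

variable {σ β : Type*} [Fintype σ] [Fintype β] [DecidableEq σ]

/-- A (randomized) Markov policy: `π s a t` is the probability of taking action `a`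
in state `s` at time `t`. -/
def IsPolicy (π : σ → β → ℕ → ℝ) : Prop :=
  (∀ s a t, 0 ≤ π s a t) ∧ ∀ s t, ∑ a : β, π s a t = 1

/-- A transition kernel: `P a s s'` is the probability of moving from `s` to `s'`
when action `a` is taken. -/
def IsKernel (P : β → σ → σ → ℝ) : Prop :=
  (∀ a s s', 0 ≤ P a s s') ∧ ∀ a s, ∑ s' : σ, P a s s' = 1

/-- `saDist P init π t s a` is the probability, under the Markov policy `π` started at
`init`, that at time `t` (1-indexed) the process is in state `s` and takes action `a`. -/
noncomputable def saDist (P : β → σ → σ → ℝ) (init : σ) (π : σ → β → ℕ → ℝ) :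
    ℕ → σ → β → ℝ
  | 0 => fun _ _ => 0
  | 1 => fun s a => (if s = init then (1 : ℝ) else 0) * π s a 1
  | (t + 2) => fun s a =>
      (∑ s' : σ, ∑ a' : β, saDist P init π (t + 1) s' a' * P a' s' s) * π s a (t + 2)

/-- Expected value of `∑_{t=1}^T f t S_t A_t` under the Markov policy `π` started at `init`. -/
noncomputable def expVal (P : β → σ → σ → ℝ) (init : σ) (π : σ → β → ℕ → ℝ)
    (T : ℕ) (f : ℕ → σ → β → ℝ) : ℝ :=
  ∑ t ∈ Finset.Icc 1 T, ∑ s : σ, ∑ a : β, saDist P init π t s a * f t s a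

end Core

section Sub

variable {S : Type*} [Fintype S] [DecidableEq S]

/-- Value of a policy in the sub-MDP with Lagrange penalty `lam t` for the active action. -/
noncomputable def subValue (P : Bool → S → S → ℝ) (s1 : S) (r : ℕ → S → Bool → ℝ)
    (lam : ℕ → ℝ) (T : ℕ) (π : S → Bool → ℕ → ℝ) : ℝ :=
  expVal P s1 π T fun t s a => r t s a - lam t * actVal a

/-- `Q(λ)`: the optimal value of the penalized sub-MDP. -/
noncomputable def Qval (P : Bool → S → S → ℝ) (s1 : S) (r : ℕ → S → Bool → ℝ)
    (T : ℕ) (lam : ℕ → ℝ) : ℝ :=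
  sSup {v | ∃ π : S → Bool → ℕ → ℝ, IsPolicy π ∧ v = subValue P s1 r lam T π}

/-- The transition kernel of the original MDP: `K` arms evolving independently. -/
def jointKernel (P : Bool → S → S → ℝ) (K : ℕ) :
    (Fin K → Bool) → (Fin K → S) → (Fin K → S) → ℝ :=
  fun a s s' => ∏ x, P (a x) (s x) (s' x)

/-- The reward of the original MDP: the sum of the arms' rewards. -/
def jointReward (r : ℕ → S → Bool → ℝ) (K : ℕ) :
    ℕ → (Fin K → S) → (Fin K → Bool) → ℝ :=
  fun t s a => ∑ x, r t (s x) (a x)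

/-- `|a|`: the number of active arms of a joint action. -/
def numActive {K : ℕ} (a : Fin K → Bool) : ℝ := ∑ x, actVal (a x)

/-- Expected total reward of a joint Markov policy in the original MDP with `K` arms,
all started at `s1`. -/
noncomputable def jointValue (P : Bool → S → S → ℝ) (s1 : S) (r : ℕ → S → Bool → ℝ)
    (T K : ℕ) (πb : (Fin K → S) → (Fin K → Bool) → ℕ → ℝ) : ℝ :=
  expVal (jointKernel P K) (fun _ => s1) πb T (jointReward r K)

/-- The Lagrangian relaxation value `P(λ)`: the supremum over all joint Markov policies of
the expected total reward minus the penalty `∑_t λ_t (|A_t| − m)`. -/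
noncomputable def lagrangeValue (P : Bool → S → S → ℝ) (s1 : S) (r : ℕ → S → Bool → ℝ)
    (T K m : ℕ) (lam : ℕ → ℝ) : ℝ :=
  sSup {v | ∃ πb : (Fin K → S) → (Fin K → Bool) → ℕ → ℝ, IsPolicy πb ∧
    v = expVal (jointKernel P K) (fun _ => s1) πb T
      (fun t s a => jointReward r K t s a - lam t * (numActive a - (m : ℝ)))}

/-- A joint Markov policy is feasible if it activates exactly `m` arms in every period
with probability one. -/
def Feasible (P : Bool → S → S → ℝ) (s1 : S) (T K m : ℕ)
    (πb : (Fin K → S) → (Fin K → Bool) → ℕ → ℝ) : Prop :=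
  IsPolicy πb ∧ ∀ t ∈ Finset.Icc 1 T, ∀ s a, numActive a ≠ (m : ℝ) →
    saDist (jointKernel P K) (fun _ => s1) πb t s a = 0

end Sub

end RMAB
namespace RMAB

section Index

variable {S : Type*} [Fintype S] [DecidableEq S]

/-- The deterministic Markov policy corresponding to a decision rule `d`. -/
def detPolicy (d : S → ℕ → Bool) : S → Bool → ℕ → ℝ :=
  fun s a t => if a = d s t then 1 else 0

/-- `d` is a Markov deterministic optimal policy of the sub-MDP `Q(lam)`. -/
def IsOptDet (P : Bool → S → S → ℝ) (s1 : S) (r : ℕ → S → Bool → ℝ)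
    (T : ℕ) (lam : ℕ → ℝ) (d : S → ℕ → Bool) : Prop :=
  subValue P s1 r lam T (detPolicy d) = Qval P s1 r T lam

/-- The index `β_t(s)`: the supremum of those `β` such that some Markov deterministic
optimal policy of the sub-MDP `Q(λ*[β,t])` takes the active action in state `s` at time `t`,
where `λ*[β,t]` is `λ*` with its `t`-th coordinate replaced by `β`. -/
noncomputable def indexβ (P : Bool → S → S → ℝ) (s1 : S) (r : ℕ → S → Bool → ℝ)
    (T : ℕ) (lamstar : ℕ → ℝ) (t : ℕ) (s : S) : ℝ :=
  sSup {b : ℝ | ∃ d : S → ℕ → Bool,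
    IsOptDet P s1 r T (Function.update lamstar t b) d ∧ d s t = true}

end Index

end RMAB
namespace RMAB

section AuxCore
set_option linter.unusedSectionVars false
variable {σ β : Type*} [Fintype σ] [Fintype β] [DecidableEq σ]

-- AUX START
lemma saDist_nonneg {P : β → σ → σ → ℝ} (hP : IsKernel P) {init : σ}
    {π : σ → β → ℕ → ℝ} (hπ : IsPolicy π) :
    ∀ t s a, 0 ≤ saDist P init π t s a := by
  intro t
  induction t using Nat.strong_induction_on with
  | _ t ih =>
    match t with
    | 0 => intro s a; simp [saDist]
    | 1 =>
      intro s a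
      exact mul_nonneg (by positivity) (hπ.1 s a 1)
    | (n + 2) =>
      intro s a
      refine mul_nonneg (Finset.sum_nonneg fun s' _ => Finset.sum_nonneg fun a' _ =>
        mul_nonneg (ih (n+1) (by omega) s' a') (hP.1 a' s' s)) (hπ.1 s a (n+2))

lemma saDist_sum_one {P : β → σ → σ → ℝ} (hP : IsKernel P) {init : σ}
    {π : σ → β → ℕ → ℝ} (hπ : IsPolicy π) :
    ∀ t, 1 ≤ t → ∑ s : σ, ∑ a : β, saDist P init π t s a = 1 := by
  intro t
  induction t using Nat.strong_induction_on with
  | _ t ih =>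
    match t with
    | 0 => omega
    | 1 =>
      intro _
      show ∑ s : σ, ∑ a : β, (if s = init then (1:ℝ) else 0) * π s a 1 = 1
      rw [Finset.sum_congr rfl (fun s _ => by rw [← Finset.mul_sum, hπ.2 s 1, mul_one])]
      simp
    | (n + 2) =>
      intro _
      show ∑ s : σ, ∑ a : β,
          (∑ s' : σ, ∑ a' : β, saDist P init π (n + 1) s' a' * P a' s' s) * π s a (n+2) = 1
      rw [Finset.sum_congr rfl (fun s _ => by rw [← Finset.mul_sum, hπ.2 s (n+2), mul_one])]
      rw [Finset.sum_comm]
      have : ∀ s' : σ, ∑ s : σ, ∑ a' : β, saDist P init π (n+1) s' a' * P a' s' s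
          = ∑ a' : β, saDist P init π (n+1) s' a' := by
        intro s'
        rw [Finset.sum_comm]
        refine Finset.sum_congr rfl fun a' _ => ?_
        rw [← Finset.mul_sum, hP.2 a' s', mul_one]
      rw [Finset.sum_congr rfl fun s' _ => this s']
      exact ih (n+1) (by omega) (by omega)

/-- Sum over function space of a product, with one coordinate weighted. -/
lemma sum_prod_pull {ι γ : Type*} [Fintype ι] [DecidableEq ι] [Fintype γ]
    (μ : ι → γ → ℝ) (h : γ → ℝ) (x : ι) :
    ∑ g : ι → γ, (∏ y, μ y (g y)) * h (g x)
      = (∑ c, μ x c * h c) * ∏ y ∈ Finset.univ.erase x, ∑ c, μ y c := by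
  have key : ∀ g : ι → γ, (∏ y, μ y (g y)) * h (g x)
      = ∏ y, (if y = x then μ y (g y) * h (g y) else μ y (g y)) := by
    intro g
    calc (∏ y, μ y (g y)) * h (g x)
        = (μ x (g x) * ∏ y ∈ Finset.univ.erase x, μ y (g y)) * h (g x) := by
          rw [Finset.mul_prod_erase Finset.univ (fun y => μ y (g y)) (Finset.mem_univ x)]
      _ = (μ x (g x) * h (g x)) * ∏ y ∈ Finset.univ.erase x, μ y (g y) := by ring
      _ = (if x = x then μ x (g x) * h (g x) else μ x (g x)) *
            ∏ y ∈ Finset.univ.erase x, (if y = x then μ y (g y) * h (g y) else μ y (g y)) := by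
          rw [if_pos rfl]
          congr 1
          exact Finset.prod_congr rfl fun y hy => (if_neg (Finset.mem_erase.1 hy).1).symm
      _ = ∏ y, (if y = x then μ y (g y) * h (g y) else μ y (g y)) :=
          Finset.mul_prod_erase Finset.univ
            (fun y => if y = x then μ y (g y) * h (g y) else μ y (g y)) (Finset.mem_univ x)
  rw [Finset.sum_congr rfl (fun g _ => key g)]
  rw [← Fintype.prod_sum (fun y c => if y = x then μ y c * h c else μ y c)]
  rw [← Finset.mul_prod_erase Finset.univ
      (fun y => ∑ c, if y = x then μ y c * h c else μ y c) (Finset.mem_univ x)]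
  simp only [if_pos rfl]
  congr 1
  exact Finset.prod_congr rfl (fun y hy => Finset.sum_congr rfl (fun c _ => by
    rw [if_neg (Finset.mem_erase.1 hy).1]))

end AuxCore

section AuxSub
set_option linter.unusedSectionVars false
variable {S : Type*} [Fintype S] [DecidableEq S]

-- AUX2 START
lemma detPolicy_isPolicy {σ' β' : Type*} [Fintype β'] [DecidableEq β']
    (d : σ' → ℕ → β') : IsPolicy (fun s a t => if a = d s t then (1:ℝ) else 0) := by
  constructor
  · intro s a t; positivity
  · intro s t; simp

lemma jointKernel_isKernel {P : Bool → S → S → ℝ} (hP : IsKernel P) (K : ℕ) :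
    IsKernel (jointKernel P K) := by
  constructor
  · intro a s s'
    exact Finset.prod_nonneg fun x _ => hP.1 _ _ _
  · intro a s
    show ∑ s' : Fin K → S, ∏ x, P (a x) (s x) (s' x) = 1
    rw [← Fintype.prod_sum (fun x c => P (a x) (s x) c)]
    exact Finset.prod_eq_one fun x _ => hP.2 _ _

/-- Marginal state-action distribution of arm `x` under a joint policy. -/
noncomputable def marg (P : Bool → S → S → ℝ) (s1 : S) {K : ℕ}
    (πb : (Fin K → S) → (Fin K → Bool) → ℕ → ℝ) (x : Fin K) (t : ℕ) (s : S) (a : Bool) : ℝ :=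
  ∑ sb : Fin K → S, ∑ ab : Fin K → Bool,
    if sb x = s ∧ ab x = a then saDist (jointKernel P K) (fun _ => s1) πb t sb ab else 0

lemma swap4 {K : ℕ} (F : S → Bool → (Fin K → S) → (Fin K → Bool) → ℝ) :
    ∑ s : S, ∑ a : Bool, ∑ sb : Fin K → S, ∑ ab : Fin K → Bool, F s a sb ab
      = ∑ sb : Fin K → S, ∑ ab : Fin K → Bool, ∑ s : S, ∑ a : Bool, F s a sb ab := by
  calc ∑ s : S, ∑ a : Bool, ∑ sb : Fin K → S, ∑ ab : Fin K → Bool, F s a sb ab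
      = ∑ s : S, ∑ sb : Fin K → S, ∑ a : Bool, ∑ ab : Fin K → Bool, F s a sb ab :=
        Finset.sum_congr rfl fun s _ => Finset.sum_comm
    _ = ∑ sb : Fin K → S, ∑ s : S, ∑ a : Bool, ∑ ab : Fin K → Bool, F s a sb ab :=
        Finset.sum_comm
    _ = ∑ sb : Fin K → S, ∑ s : S, ∑ ab : Fin K → Bool, ∑ a : Bool, F s a sb ab :=
        Finset.sum_congr rfl fun sb _ => Finset.sum_congr rfl fun s _ => Finset.sum_comm
    _ = ∑ sb : Fin K → S, ∑ ab : Fin K → Bool, ∑ s : S, ∑ a : Bool, F s a sb ab :=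
        Finset.sum_congr rfl fun sb _ => Finset.sum_comm

lemma marg_apply (P : Bool → S → S → ℝ) (s1 : S) {K : ℕ}
    (πb : (Fin K → S) → (Fin K → Bool) → ℕ → ℝ) (x : Fin K) (t : ℕ) (f : S → Bool → ℝ) :
    ∑ s : S, ∑ a : Bool, marg P s1 πb x t s a * f s a
      = ∑ sb : Fin K → S, ∑ ab : Fin K → Bool,
          saDist (jointKernel P K) (fun _ => s1) πb t sb ab * f (sb x) (ab x) := by
  simp only [marg, Finset.sum_mul, ite_mul, zero_mul]
  rw [swap4]
  refine Finset.sum_congr rfl fun sb _ => Finset.sum_congr rfl fun ab _ => ?_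
  simp only [ite_and, ite_mul, zero_mul]
  simp [Finset.sum_ite_eq]

lemma marg_nonneg {P : Bool → S → S → ℝ} (hP : IsKernel P) (s1 : S) {K : ℕ}
    {πb : (Fin K → S) → (Fin K → Bool) → ℕ → ℝ} (hπb : IsPolicy πb)
    (x : Fin K) (t : ℕ) (s : S) (a : Bool) : 0 ≤ marg P s1 πb x t s a := by
  refine Finset.sum_nonneg fun sb _ => Finset.sum_nonneg fun ab _ => ?_
  split
  · exact saDist_nonneg (jointKernel_isKernel hP K) hπb t sb ab
  · exact le_rfl
lemma ite_sum {α : Type*} {c : Prop} [Decidable c] {t : Finset α} (f : α → ℝ) :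
    ∑ a ∈ t, (if c then f a else 0) = if c then ∑ a ∈ t, f a else 0 := by
  split <;> simp

/-- Collapsing the predecessor distribution onto a single coordinate. -/
lemma pred_sum {P : Bool → S → S → ℝ} (hP : IsKernel P) (s1 : S) {K : ℕ}
    (πb : (Fin K → S) → (Fin K → Bool) → ℕ → ℝ) (x : Fin K) (n : ℕ) (s : S) :
    ∑ sb : Fin K → S, (if sb x = s then
        (∑ sb' : Fin K → S, ∑ ab' : Fin K → Bool,
          saDist (jointKernel P K) (fun _ => s1) πb (n+1) sb' ab' * jointKernel P K ab' sb' sb)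
      else 0)
    = ∑ s' : S, ∑ a' : Bool, marg P s1 πb x (n+1) s' a' * P a' s' s := by
  rw [marg_apply P s1 πb x (n+1) (fun s' a' => P a' s' s)]
  calc ∑ sb : Fin K → S, (if sb x = s then
        (∑ sb' : Fin K → S, ∑ ab' : Fin K → Bool,
          saDist (jointKernel P K) (fun _ => s1) πb (n+1) sb' ab' * jointKernel P K ab' sb' sb)
      else 0)
      = ∑ sb : Fin K → S, ∑ sb' : Fin K → S, ∑ ab' : Fin K → Bool,
          (if sb x = s then
            saDist (jointKernel P K) (fun _ => s1) πb (n+1) sb' ab' * jointKernel P K ab' sb' sb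
          else 0) := by
        refine Finset.sum_congr rfl fun sb _ => ?_
        split
        · rfl
        · simp
    _ = ∑ sb' : Fin K → S, ∑ ab' : Fin K → Bool, ∑ sb : Fin K → S,
          (if sb x = s then
            saDist (jointKernel P K) (fun _ => s1) πb (n+1) sb' ab' * jointKernel P K ab' sb' sb
          else 0) := by
        rw [Finset.sum_comm]
        exact Finset.sum_congr rfl fun sb' _ => Finset.sum_comm
    _ = ∑ sb' : Fin K → S, ∑ ab' : Fin K → Bool,
          saDist (jointKernel P K) (fun _ => s1) πb (n+1) sb' ab' * P (ab' x) (sb' x) s := by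
        refine Finset.sum_congr rfl fun sb' _ => Finset.sum_congr rfl fun ab' _ => ?_
        have e1 : ∀ sb : Fin K → S, (if sb x = s then
              saDist (jointKernel P K) (fun _ => s1) πb (n+1) sb' ab' * jointKernel P K ab' sb' sb
            else 0)
            = saDist (jointKernel P K) (fun _ => s1) πb (n+1) sb' ab' *
              ((∏ y, P (ab' y) (sb' y) (sb y)) * (if sb x = s then 1 else 0)) := by
          intro sb
          by_cases h : sb x = s <;> simp [h, jointKernel, mul_comm]
        rw [Finset.sum_congr rfl fun sb _ => e1 sb, ← Finset.mul_sum]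
        congr 1
        rw [sum_prod_pull (fun y c => P (ab' y) (sb' y) c) (fun c => if c = s then 1 else 0) x]
        have e2 : ∑ c : S, P (ab' x) (sb' x) c * (if c = s then 1 else 0) = P (ab' x) (sb' x) s := by
          rw [Finset.sum_congr rfl fun c _ => (by by_cases h : c = s <;> simp [h] :
            P (ab' x) (sb' x) c * (if c = s then 1 else 0) = if c = s then P (ab' x) (sb' x) c else 0)]
          simp
        rw [e2, Finset.prod_congr rfl fun y _ => hP.2 (ab' y) (sb' y), Finset.prod_const_one,
          mul_one]

/-- Marginal state distribution of arm `x`. -/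
noncomputable def margW (P : Bool → S → S → ℝ) (s1 : S) {K : ℕ}
    (πb : (Fin K → S) → (Fin K → Bool) → ℕ → ℝ) (x : Fin K) : ℕ → S → ℝ
  | 0 => fun _ => 0
  | 1 => fun s => if s = s1 then 1 else 0
  | (n+2) => fun s => ∑ s' : S, ∑ a' : Bool, marg P s1 πb x (n+1) s' a' * P a' s' s

lemma marg_one (P : Bool → S → S → ℝ) (s1 : S) {K : ℕ}
    (πb : (Fin K → S) → (Fin K → Bool) → ℕ → ℝ) (x : Fin K) (s : S) (a : Bool) :
    marg P s1 πb x 1 s a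
      = if s = s1 then (∑ ab : Fin K → Bool, if ab x = a then πb (fun _ => s1) ab 1 else 0)
        else 0 := by
  show (∑ sb : Fin K → S, ∑ ab : Fin K → Bool,
    if sb x = s ∧ ab x = a then (if sb = (fun _ => s1) then (1:ℝ) else 0) * πb sb ab 1 else 0) = _
  have e1 : ∀ sb ab, (if sb x = s ∧ ab x = a then
        (if sb = (fun _ => s1) then (1:ℝ) else 0) * πb sb ab 1 else 0)
      = if sb = (fun _ => s1) then (if sb x = s ∧ ab x = a then πb sb ab 1 else 0) else 0 := by
    intro sb ab
    by_cases h : sb = (fun _ => s1) <;> by_cases h2 : sb x = s ∧ ab x = a <;> simp [h, h2]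
  rw [Finset.sum_congr rfl fun sb _ => Finset.sum_congr rfl fun ab _ => e1 sb ab]
  rw [Finset.sum_congr rfl fun sb _ => ite_sum _]
  rw [Finset.sum_ite_eq' Finset.univ (fun _ => s1)
    (fun sb => ∑ ab : Fin K → Bool, if sb x = s ∧ ab x = a then πb sb ab 1 else 0)]
  simp only [Finset.mem_univ, if_true]
  by_cases h : s = s1
  · subst h
    simp only [if_pos rfl]
    refine Finset.sum_congr rfl fun ab _ => ?_
    simp
  · rw [if_neg h, Finset.sum_congr rfl fun ab _ => ?_, Finset.sum_const_zero]
    rw [if_neg]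
    rintro ⟨h1, -⟩
    exact h h1.symm

lemma marg_sum {P : Bool → S → S → ℝ} (hP : IsKernel P) (s1 : S) {K : ℕ}
    {πb : (Fin K → S) → (Fin K → Bool) → ℕ → ℝ} (hπb : IsPolicy πb) (x : Fin K) :
    ∀ t, 1 ≤ t → ∀ s, ∑ a : Bool, marg P s1 πb x t s a = margW P s1 πb x t s := by
  intro t
  match t with
  | 0 => omega
  | 1 =>
    intro _ s
    rw [Finset.sum_congr rfl fun a _ => marg_one P s1 πb x s a, ite_sum]
    show _ = if s = s1 then (1:ℝ) else 0
    refine if_congr Iff.rfl ?_ rfl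
    rw [Finset.sum_comm]
    rw [Finset.sum_congr rfl fun ab _ => Finset.sum_ite_eq Finset.univ (ab x)
      (fun _ => πb (fun _ => s1) ab 1)]
    simp only [Finset.mem_univ, if_true]
    exact hπb.2 _ 1
  | (n+2) =>
    intro _ s
    show ∑ a : Bool, (∑ sb : Fin K → S, ∑ ab : Fin K → Bool,
      if sb x = s ∧ ab x = a then
        (∑ sb' : Fin K → S, ∑ ab' : Fin K → Bool,
          saDist (jointKernel P K) (fun _ => s1) πb (n+1) sb' ab' * jointKernel P K ab' sb' sb)
        * πb sb ab (n+2) else 0) = _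
    rw [Finset.sum_comm]
    rw [Finset.sum_congr rfl fun sb _ => Finset.sum_comm]
    have e1 : ∀ sb, ∑ ab : Fin K → Bool, ∑ a : Bool, (if sb x = s ∧ ab x = a then
        (∑ sb' : Fin K → S, ∑ ab' : Fin K → Bool,
          saDist (jointKernel P K) (fun _ => s1) πb (n+1) sb' ab' * jointKernel P K ab' sb' sb)
        * πb sb ab (n+2) else 0)
      = (if sb x = s then
        (∑ sb' : Fin K → S, ∑ ab' : Fin K → Bool,
          saDist (jointKernel P K) (fun _ => s1) πb (n+1) sb' ab' * jointKernel P K ab' sb' sb)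
        else 0) := by
      intro sb
      have : ∀ ab : Fin K → Bool, ∑ a : Bool, (if sb x = s ∧ ab x = a then
          (∑ sb' : Fin K → S, ∑ ab' : Fin K → Bool,
            saDist (jointKernel P K) (fun _ => s1) πb (n+1) sb' ab' * jointKernel P K ab' sb' sb)
          * πb sb ab (n+2) else 0)
        = if sb x = s then
          (∑ sb' : Fin K → S, ∑ ab' : Fin K → Bool,
            saDist (jointKernel P K) (fun _ => s1) πb (n+1) sb' ab' * jointKernel P K ab' sb' sb)
          * πb sb ab (n+2) else 0 := by
        intro ab
        simp only [ite_and]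
        rw [ite_sum]
        refine if_congr Iff.rfl ?_ rfl
        rw [Finset.sum_ite_eq Finset.univ (ab x)]
        simp
      rw [Finset.sum_congr rfl fun ab _ => this ab, ite_sum, ← Finset.mul_sum, hπb.2 sb (n+2),
        mul_one]
    rw [Finset.sum_congr rfl fun sb _ => e1 sb]
    exact pred_sum hP s1 πb x n s

noncomputable def inducedPol (P : Bool → S → S → ℝ) (s1 : S) {K : ℕ}
    (πb : (Fin K → S) → (Fin K → Bool) → ℕ → ℝ) (x : Fin K) : S → Bool → ℕ → ℝ :=
  fun s a t => if margW P s1 πb x t s = 0 then (if a then 1 else 0)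
    else marg P s1 πb x t s a / margW P s1 πb x t s

lemma margW_nonneg {P : Bool → S → S → ℝ} (hP : IsKernel P) (s1 : S) {K : ℕ}
    {πb : (Fin K → S) → (Fin K → Bool) → ℕ → ℝ} (hπb : IsPolicy πb) (x : Fin K) :
    ∀ t s, 0 ≤ margW P s1 πb x t s := by
  intro t s
  match t with
  | 0 => exact le_rfl
  | 1 => show (0:ℝ) ≤ if s = s1 then 1 else 0; positivity
  | (n+2) =>
    refine Finset.sum_nonneg fun s' _ => Finset.sum_nonneg fun a' _ =>
      mul_nonneg (marg_nonneg hP s1 hπb x (n+1) s' a') (hP.1 a' s' s)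

lemma inducedPol_isPolicy {P : Bool → S → S → ℝ} (hP : IsKernel P) (s1 : S) {K : ℕ}
    {πb : (Fin K → S) → (Fin K → Bool) → ℕ → ℝ} (hπb : IsPolicy πb) (x : Fin K) :
    IsPolicy (inducedPol P s1 πb x) := by
  constructor
  · intro s a t
    unfold inducedPol
    split
    · positivity
    · exact div_nonneg (marg_nonneg hP s1 hπb x t s a) (margW_nonneg hP s1 hπb x t s)
  · intro s t
    by_cases h : margW P s1 πb x t s = 0
    · simp [inducedPol, h]
    · simp only [inducedPol, if_neg h]
      rw [← Finset.sum_div]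
      have ht : 1 ≤ t := by
        by_contra hc
        exact h (by interval_cases t; rfl)
      rw [marg_sum hP s1 hπb x t ht s, div_self h]

lemma marg_eq_margW_mul {P : Bool → S → S → ℝ} (hP : IsKernel P) (s1 : S) {K : ℕ}
    {πb : (Fin K → S) → (Fin K → Bool) → ℕ → ℝ} (hπb : IsPolicy πb) (x : Fin K)
    (t : ℕ) (ht : 1 ≤ t) (s : S) (a : Bool) :
    marg P s1 πb x t s a = margW P s1 πb x t s * inducedPol P s1 πb x s a t := by
  by_cases h : margW P s1 πb x t s = 0
  · rw [h, zero_mul]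
    have hsum := marg_sum hP s1 hπb x t ht s
    rw [h] at hsum
    have := (Finset.sum_eq_zero_iff_of_nonneg
      (fun a' _ => marg_nonneg hP s1 hπb x t s a')).1 hsum
    exact this a (Finset.mem_univ a)
  · rw [inducedPol, if_neg h, mul_comm, div_mul_cancel₀ _ h]

lemma saDist_induced {P : Bool → S → S → ℝ} (hP : IsKernel P) (s1 : S) {K : ℕ}
    {πb : (Fin K → S) → (Fin K → Bool) → ℕ → ℝ} (hπb : IsPolicy πb) (x : Fin K) :
    ∀ t s a, saDist P s1 (inducedPol P s1 πb x) t s a = marg P s1 πb x t s a := by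
  intro t
  induction t using Nat.strong_induction_on with
  | _ t ih =>
    match t with
    | 0 =>
      intro s a
      show (0:ℝ) = marg P s1 πb x 0 s a
      simp [marg, saDist]
    | 1 =>
      intro s a
      show (if s = s1 then (1:ℝ) else 0) * inducedPol P s1 πb x s a 1 = _
      rw [marg_eq_margW_mul hP s1 hπb x 1 (by omega) s a]
      rfl
    | (n+2) =>
      intro s a
      show (∑ s' : S, ∑ a' : Bool, saDist P s1 (inducedPol P s1 πb x) (n+1) s' a' * P a' s' s)
          * inducedPol P s1 πb x s a (n+2) = _
      rw [marg_eq_margW_mul hP s1 hπb x (n+2) (by omega) s a]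
      congr 1
      show _ = ∑ s' : S, ∑ a' : Bool, marg P s1 πb x (n+1) s' a' * P a' s' s
      exact Finset.sum_congr rfl fun s' _ => Finset.sum_congr rfl fun a' _ => by
        rw [ih (n+1) (by omega) s' a']

/-- The joint deterministic decision rule applying `d` on each arm. -/
def jointDet (d : S → ℕ → Bool) (K : ℕ) : (Fin K → S) → ℕ → (Fin K → Bool) :=
  fun sb t x => d (sb x) t

lemma det_collapse {α : Type*} [Fintype α] [DecidableEq α] (F : α) (g : α → ℝ)
    (p : α → Prop) [DecidablePred p] :
    ∑ ab : α, (if p ab then g ab * (if ab = F then 1 else 0) else 0)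
      = if p F then g F else 0 := by
  have e : ∀ ab, (if p ab then g ab * (if ab = F then 1 else 0) else 0)
      = if ab = F then (if p ab then g ab else 0) else 0 := by
    intro ab
    by_cases h1 : p ab <;> by_cases h2 : ab = F <;> simp [h1, h2]
  rw [Finset.sum_congr rfl fun ab _ => e ab,
    Finset.sum_ite_eq' Finset.univ F (fun ab => if p ab then g ab else 0)]
  simp

lemma marg_jointDet {P : Bool → S → S → ℝ} (hP : IsKernel P) (s1 : S) {K : ℕ}
    (d : S → ℕ → Bool) (x : Fin K) :
    ∀ t s a, marg P s1 (fun sb ab t => if ab = jointDet d K sb t then (1:ℝ) else 0) x t s a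
      = saDist P s1 (detPolicy d) t s a := by
  intro t
  induction t using Nat.strong_induction_on with
  | _ t ih =>
    match t with
    | 0 =>
      intro s a
      show marg _ _ _ _ 0 s a = (0:ℝ)
      simp [marg, saDist]
    | 1 =>
      intro s a
      rw [marg_one]
      show _ = (if s = s1 then (1:ℝ) else 0) * (if a = d s 1 then 1 else 0)
      have e : ∀ ab : Fin K → Bool,
          (if ab x = a then (if ab = jointDet d K (fun _ => s1) 1 then (1:ℝ) else 0) else 0)
          = if ab x = a then 1 * (if ab = jointDet d K (fun _ => s1) 1 then 1 else 0) else 0 := by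
        intro ab; rw [one_mul]
      rw [Finset.sum_congr rfl fun ab _ => e ab,
        det_collapse (jointDet d K (fun _ => s1) 1) (fun _ => (1:ℝ)) (fun ab => ab x = a)]
      by_cases h : s = s1
      · subst h
        by_cases h2 : d s 1 = a
        · simp [jointDet, h2]
        · simp [jointDet, h2, Ne.symm h2]
      · simp [h]
    | (n+2) =>
      intro s a
      show (∑ sb : Fin K → S, ∑ ab : Fin K → Bool,
          if sb x = s ∧ ab x = a then
            (∑ sb' : Fin K → S, ∑ ab' : Fin K → Bool,
              saDist (jointKernel P K) (fun _ => s1)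
                (fun sb ab t => if ab = jointDet d K sb t then (1:ℝ) else 0) (n+1) sb' ab'
              * jointKernel P K ab' sb' sb)
            * (if ab = jointDet d K sb (n+2) then 1 else 0) else 0)
        = (∑ s' : S, ∑ a' : Bool, saDist P s1 (detPolicy d) (n+1) s' a' * P a' s' s)
            * detPolicy d s a (n+2)
      have e1 : ∀ sb : Fin K → S, (∑ ab : Fin K → Bool,
          if sb x = s ∧ ab x = a then
            (∑ sb' : Fin K → S, ∑ ab' : Fin K → Bool,
              saDist (jointKernel P K) (fun _ => s1)
                (fun sb ab t => if ab = jointDet d K sb t then (1:ℝ) else 0) (n+1) sb' ab'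
              * jointKernel P K ab' sb' sb)
            * (if ab = jointDet d K sb (n+2) then 1 else 0) else 0)
          = (if sb x = s then
              (∑ sb' : Fin K → S, ∑ ab' : Fin K → Bool,
                saDist (jointKernel P K) (fun _ => s1)
                  (fun sb ab t => if ab = jointDet d K sb t then (1:ℝ) else 0) (n+1) sb' ab'
                * jointKernel P K ab' sb' sb) else 0)
            * (if a = d s (n+2) then 1 else 0) := by
        intro sb
        rw [det_collapse (jointDet d K sb (n+2)) _ (fun ab => sb x = s ∧ ab x = a)]
        show (if sb x = s ∧ d (sb x) (n+2) = a then _ else 0) = _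
        by_cases h1 : sb x = s
        · by_cases h2 : a = d s (n+2)
          · simp [h1, h2]
          · rw [if_neg h2, mul_zero, if_neg]
            rintro ⟨-, h3⟩
            rw [h1] at h3
            exact h2 h3.symm
        · simp [h1]
      rw [Finset.sum_congr rfl fun sb _ => e1 sb, ← Finset.sum_mul]
      have e2 := pred_sum hP s1
        (fun sb ab t => if ab = jointDet d K sb t then (1:ℝ) else 0) x n s
      rw [e2]
      congr 1
      · exact Finset.sum_congr rfl fun s' _ => Finset.sum_congr rfl fun a' _ => by
          rw [ih (n+1) (by omega) s' a']

lemma subValue_shift (P : Bool → S → S → ℝ) (s1 : S) (r : ℕ → S → Bool → ℝ)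
    (lam lam' : ℕ → ℝ) (T : ℕ) (π : S → Bool → ℕ → ℝ) :
    subValue P s1 r lam' T π = subValue P s1 r lam T π
      - ∑ t ∈ Finset.Icc 1 T, (lam' t - lam t) * (∑ s : S, saDist P s1 π t s true) := by
  unfold subValue expVal
  rw [← Finset.sum_sub_distrib]
  refine Finset.sum_congr rfl fun t _ => ?_
  rw [Finset.mul_sum, ← Finset.sum_sub_distrib]
  refine Finset.sum_congr rfl fun s _ => ?_
  rw [Fintype.sum_bool, Fintype.sum_bool]
  simp [actVal]
  ring

lemma expVal_le {σ β : Type*} [Fintype σ] [Fintype β] [DecidableEq σ]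
    [Nonempty σ] [Nonempty β]
    {P : β → σ → σ → ℝ} (hP : IsKernel P) {init : σ}
    {π : σ → β → ℕ → ℝ} (hπ : IsPolicy π) (T : ℕ) (g : ℕ → σ → β → ℝ) :
    expVal P init π T g ≤ ∑ t ∈ Finset.Icc 1 T,
      Finset.univ.sup' Finset.univ_nonempty (fun p : σ × β => g t p.1 p.2) := by
  unfold expVal
  refine Finset.sum_le_sum fun t ht => ?_
  have h1 : 1 ≤ t := (Finset.mem_Icc.1 ht).1
  calc ∑ s : σ, ∑ a : β, saDist P init π t s a * g t s a
      ≤ ∑ s : σ, ∑ a : β, saDist P init π t s a *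
          Finset.univ.sup' Finset.univ_nonempty (fun p : σ × β => g t p.1 p.2) := by
        refine Finset.sum_le_sum fun s _ => Finset.sum_le_sum fun a _ =>
          mul_le_mul_of_nonneg_left ?_ (saDist_nonneg hP hπ t s a)
        exact Finset.le_sup' (fun p : σ × β => g t p.1 p.2) (Finset.mem_univ (s, a))
    _ = Finset.univ.sup' Finset.univ_nonempty (fun p : σ × β => g t p.1 p.2) := by
        rw [Finset.sum_congr rfl fun s (_ : s ∈ Finset.univ) => (Finset.sum_mul _ _ _).symm,
          ← Finset.sum_mul, saDist_sum_one hP hπ t h1, one_mul]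

lemma subValue_le_Qval {P : Bool → S → S → ℝ} (hP : IsKernel P) (s1 : S)
    (r : ℕ → S → Bool → ℝ) (lam : ℕ → ℝ) (T : ℕ)
    {π : S → Bool → ℕ → ℝ} (hπ : IsPolicy π) :
    subValue P s1 r lam T π ≤ Qval P s1 r T lam := by
  have : Nonempty S := ⟨s1⟩
  refine le_csSup ⟨∑ t ∈ Finset.Icc 1 T, Finset.univ.sup' Finset.univ_nonempty
    (fun p : S × Bool => r t p.1 p.2 - lam t * actVal p.2), ?_⟩ ⟨π, hπ, rfl⟩
  rintro v ⟨π', hπ', rfl⟩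
  exact expVal_le hP hπ' T _

lemma lagrange_term {P : Bool → S → S → ℝ} (hP : IsKernel P) (s1 : S) {K : ℕ}
    {πb : (Fin K → S) → (Fin K → Bool) → ℕ → ℝ} (hπb : IsPolicy πb)
    (r : ℕ → S → Bool → ℝ) (lam : ℕ → ℝ) (T m : ℕ) :
    expVal (jointKernel P K) (fun _ => s1) πb T
        (fun t sb ab => jointReward r K t sb ab - lam t * (numActive ab - (m : ℝ)))
      = (∑ x : Fin K, subValue P s1 r lam T (inducedPol P s1 πb x))
        + ∑ t ∈ Finset.Icc 1 T, lam t * m := by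
  unfold expVal subValue expVal
  conv_rhs => rw [Finset.sum_comm, ← Finset.sum_add_distrib]
  refine Finset.sum_congr rfl fun t ht => ?_
  have h1 : 1 ≤ t := (Finset.mem_Icc.1 ht).1
  have ef : ∀ (sb : Fin K → S) (ab : Fin K → Bool),
      jointReward r K t sb ab - lam t * (numActive ab - (m : ℝ))
      = (∑ x, (r t (sb x) (ab x) - lam t * actVal (ab x))) + lam t * m := by
    intro sb ab
    simp only [jointReward, numActive]
    rw [Finset.sum_sub_distrib, ← Finset.mul_sum]
    ring
  calc ∑ sb : Fin K → S, ∑ ab : Fin K → Bool,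
        saDist (jointKernel P K) (fun _ => s1) πb t sb ab *
          (jointReward r K t sb ab - lam t * (numActive ab - (m : ℝ)))
      = (∑ sb : Fin K → S, ∑ ab : Fin K → Bool, ∑ x : Fin K,
          saDist (jointKernel P K) (fun _ => s1) πb t sb ab *
            (r t (sb x) (ab x) - lam t * actVal (ab x)))
        + (∑ sb : Fin K → S, ∑ ab : Fin K → Bool,
            saDist (jointKernel P K) (fun _ => s1) πb t sb ab) * (lam t * m) := by
        rw [Finset.sum_mul, ← Finset.sum_add_distrib]
        refine Finset.sum_congr rfl fun sb _ => ?_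
        rw [Finset.sum_mul, ← Finset.sum_add_distrib]
        refine Finset.sum_congr rfl fun ab _ => ?_
        rw [ef sb ab, mul_add, Finset.mul_sum]
    _ = (∑ x : Fin K, ∑ s : S, ∑ a : Bool,
          saDist P s1 (inducedPol P s1 πb x) t s a * (r t s a - lam t * actVal a))
        + lam t * m := by
        rw [saDist_sum_one (jointKernel_isKernel hP K) hπb t h1, one_mul]
        congr 1
        have sw : (∑ sb : Fin K → S, ∑ ab : Fin K → Bool, ∑ x : Fin K,
            saDist (jointKernel P K) (fun _ => s1) πb t sb ab *
              (r t (sb x) (ab x) - lam t * actVal (ab x)))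
            = ∑ x : Fin K, ∑ sb : Fin K → S, ∑ ab : Fin K → Bool,
              saDist (jointKernel P K) (fun _ => s1) πb t sb ab *
                (r t (sb x) (ab x) - lam t * actVal (ab x)) := by
          rw [Finset.sum_congr rfl fun sb (_ : sb ∈ Finset.univ) => Finset.sum_comm,
            Finset.sum_comm]
        rw [sw]
        refine Finset.sum_congr rfl fun x _ => ?_
        rw [← marg_apply P s1 πb x t (fun s a => r t s a - lam t * actVal a)]
        refine Finset.sum_congr rfl fun s _ => Finset.sum_congr rfl fun a _ => ?_
        rw [saDist_induced hP s1 hπb x t s a]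

lemma subValue_induced_jointDet {P : Bool → S → S → ℝ} (hP : IsKernel P) (s1 : S) {K : ℕ}
    (d' : S → ℕ → Bool) (x : Fin K) (r : ℕ → S → Bool → ℝ) (lam : ℕ → ℝ) (T : ℕ) :
    subValue P s1 r lam T (inducedPol P s1
        (fun sb ab t => if ab = jointDet d' K sb t then (1:ℝ) else 0) x)
      = subValue P s1 r lam T (detPolicy d') := by
  unfold subValue expVal
  refine Finset.sum_congr rfl fun t _ => Finset.sum_congr rfl fun s _ =>
    Finset.sum_congr rfl fun a _ => ?_
  rw [saDist_induced hP s1 (detPolicy_isPolicy (jointDet d' K)) x t s a,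
    marg_jointDet hP s1 d' x t s a]

lemma lagrange_mem {P : Bool → S → S → ℝ} (hP : IsKernel P) (s1 : S)
    (r : ℕ → S → Bool → ℝ) (lam : ℕ → ℝ) (T K m : ℕ) (d' : S → ℕ → Bool) :
    (K : ℝ) * subValue P s1 r lam T (detPolicy d') + ∑ t ∈ Finset.Icc 1 T, lam t * m
      ∈ {v | ∃ πb : (Fin K → S) → (Fin K → Bool) → ℕ → ℝ, IsPolicy πb ∧
          v = expVal (jointKernel P K) (fun _ => s1) πb T
            (fun t s a => jointReward r K t s a - lam t * (numActive a - (m : ℝ)))} := by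
  refine ⟨fun sb ab t => if ab = jointDet d' K sb t then (1:ℝ) else 0,
    detPolicy_isPolicy (jointDet d' K), ?_⟩
  rw [lagrange_term hP s1 (detPolicy_isPolicy (jointDet d' K)) r lam T m]
  congr 1
  rw [Finset.sum_congr rfl fun x _ => subValue_induced_jointDet hP s1 d' x r lam T]
  rw [Finset.sum_const, Finset.card_univ, Fintype.card_fin, nsmul_eq_mul]

lemma lagrange_le {P : Bool → S → S → ℝ} (hP : IsKernel P) (s1 : S)
    (r : ℕ → S → Bool → ℝ) (lam : ℕ → ℝ) (T K m : ℕ) :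
    ∀ v ∈ {v | ∃ πb : (Fin K → S) → (Fin K → Bool) → ℕ → ℝ, IsPolicy πb ∧
          v = expVal (jointKernel P K) (fun _ => s1) πb T
            (fun t s a => jointReward r K t s a - lam t * (numActive a - (m : ℝ)))},
      v ≤ (K : ℝ) * Qval P s1 r T lam + ∑ t ∈ Finset.Icc 1 T, lam t * m := by
  rintro v ⟨πb, hπb, rfl⟩
  rw [lagrange_term hP s1 hπb r lam T m]
  refine add_le_add ?_ le_rfl
  calc ∑ x : Fin K, subValue P s1 r lam T (inducedPol P s1 πb x)
      ≤ ∑ _x : Fin K, Qval P s1 r T lam :=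
        Finset.sum_le_sum fun x _ => subValue_le_Qval hP s1 r lam T
          (inducedPol_isPolicy hP s1 hπb x)
    _ = (K : ℝ) * Qval P s1 r T lam := by
        rw [Finset.sum_const, Finset.card_univ, Fintype.card_fin, nsmul_eq_mul]

theorem subgradient_of_lagrangeValue'
    (T K m : ℕ) (hm : m ≤ K)
    (P : Bool → S → S → ℝ) (hP : IsKernel P) (s1 : S)
    (r : ℕ → S → Bool → ℝ) (hr : ∀ t s a, 0 ≤ r t s a)
    (lam : ℕ → ℝ) (d : S → ℕ → Bool)
    (hopt : subValue P s1 r lam T (detPolicy d) = Qval P s1 r T lam) :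
    ∀ lam' : ℕ → ℝ,
      lagrangeValue P s1 r T K m lam
          + ∑ t ∈ Finset.Icc 1 T,
              ((m : ℝ) - (K : ℝ) * ∑ s : S, saDist P s1 (detPolicy d) t s true)
                * (lam' t - lam t)
        ≤ lagrangeValue P s1 r T K m lam' := by
  intro lam'
  have h1 : lagrangeValue P s1 r T K m lam
      ≤ (K : ℝ) * Qval P s1 r T lam + ∑ t ∈ Finset.Icc 1 T, lam t * m :=
    csSup_le ⟨_, lagrange_mem hP s1 r lam T K m d⟩ (lagrange_le hP s1 r lam T K m)
  rw [← hopt] at h1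
  have h2 : (K : ℝ) * subValue P s1 r lam' T (detPolicy d) + ∑ t ∈ Finset.Icc 1 T, lam' t * m
      ≤ lagrangeValue P s1 r T K m lam' :=
    le_csSup ⟨(K : ℝ) * Qval P s1 r T lam' + ∑ t ∈ Finset.Icc 1 T, lam' t * m,
      lagrange_le hP s1 r lam' T K m⟩ (lagrange_mem hP s1 r lam' T K m d)
  have h3 : (K : ℝ) * subValue P s1 r lam' T (detPolicy d)
      = (K : ℝ) * subValue P s1 r lam T (detPolicy d)
        - (K : ℝ) * ∑ t ∈ Finset.Icc 1 T,
            (lam' t - lam t) * (∑ s : S, saDist P s1 (detPolicy d) t s true) := by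
    rw [subValue_shift P s1 r lam lam' T (detPolicy d)]
    ring
  have key : (∑ t ∈ Finset.Icc 1 T, lam t * m)
      + (∑ t ∈ Finset.Icc 1 T,
          ((m : ℝ) - (K : ℝ) * ∑ s : S, saDist P s1 (detPolicy d) t s true)
            * (lam' t - lam t))
      + (K : ℝ) * ∑ t ∈ Finset.Icc 1 T,
          (lam' t - lam t) * (∑ s : S, saDist P s1 (detPolicy d) t s true)
      = ∑ t ∈ Finset.Icc 1 T, lam' t * m := by
    rw [Finset.mul_sum, ← Finset.sum_add_distrib, ← Finset.sum_add_distrib]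
    exact Finset.sum_congr rfl fun t _ => by ring
  linarith

end AuxSub

/-- For every `λ ∈ ℝ^T` and every Markov deterministic optimal policy `π^λ`
of the sub-MDP `Q(λ)`, the vector `(m − K·E^{π^λ}[A_t])_{1 ≤ t ≤ T}` is a subgradient of
`P` at `λ`: for all `λ'`, `P(λ') ≥ P(λ) + ∑_t (m − K·E^{π^λ}[A_t])·(λ'_t − λ_t)`. -/
theorem subgradient_of_lagrangeValue
    {S : Type*} [Fintype S] [DecidableEq S]
    (T K m : ℕ) (hm : m ≤ K)
    (P : Bool → S → S → ℝ) (hP : IsKernel P) (s1 : S)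
    (r : ℕ → S → Bool → ℝ) (hr : ∀ t s a, 0 ≤ r t s a)
    (lam : ℕ → ℝ) (d : S → ℕ → Bool)
    (hopt : IsOptDet P s1 r T lam d) :
    ∀ lam' : ℕ → ℝ,
      lagrangeValue P s1 r T K m lam
          + ∑ t ∈ Finset.Icc 1 T,
              ((m : ℝ) - (K : ℝ) * ∑ s : S, saDist P s1 (detPolicy d) t s true)
                * (lam' t - lam t)
        ≤ lagrangeValue P s1 r T K m lam' :=
  subgradient_of_lagrangeValue' T K m hm P hP s1 r hr lam d hopt

end RMAB
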